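/- Let E_X, E_Z > 0, let 0 < ε < 1, suppose E_X/E_Z ≥ 1/ε, and let L₁, L₂ be integers with L₁ ≥ -log₂(ε) - log₂(E_Z) and L₂ ≥ -log₂(ε) + log₂(E_X). With p_l = 1/(1 + e^{2^l/E_X}) and p̃_l = 1/(1 + e^{2^l/E_Z}), the following inequality holds: Σ_{l=-L₁}^{L₂} [H(p_l ⊗ p̃_l) - H(p̃_l)] ≥ log₂(1 + E_X/E_Z) - 5·log₂(e)·ε. -/

import Mathlib

/-- The binary entropy function (base 2): `H(p) = -p log₂ p - (1-p) log₂ (1-p)`. -/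
noncomputable def binEnt (p : ℝ) : ℝ :=
  -(p * Real.logb 2 p) - (1 - p) * Real.logb 2 (1 - p)

/-- The binary convolution `p ⊗ q = p(1-q) + q(1-p)`. -/
def binConv (p q : ℝ) : ℝ := p * (1 - q) + q * (1 - p)


open Real
noncomputable def psiF (x : ℝ) : ℝ := log (sinh x) - x * cosh x / sinh x

lemma binEntropy_sigmoid {x : ℝ} (hx : 0 < x) :
    Real.binEntropy (1 / (1 + Real.exp x)) = psiF x - psiF (x / 2) := by
  set y := Real.exp (x / 2) with hy_def
  have hy1 : 1 < y := by
    rw [hy_def]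
    have := Real.add_one_le_exp (x/2)
    nlinarith [Real.exp_pos (x/2)]
  have hy0 : 0 < y := by linarith
  have hyx : Real.exp x = y ^ 2 := by
    rw [hy_def, sq, ← Real.exp_add]; ring_nf
  have hxlog : Real.log y = x / 2 := Real.log_exp _
  have hy2 : (0:ℝ) < y ^ 2 := by positivity
  have hy21 : (0:ℝ) < y ^ 2 - 1 := by nlinarith
  have hy41 : (0:ℝ) < y ^ 4 - 1 := by nlinarith
  have h1y2 : (0:ℝ) < 1 + y ^ 2 := by positivity
  -- hyperbolic functions in terms of y
  have hs : Real.sinh x = (y ^ 4 - 1) / (2 * y ^ 2) := by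
    rw [Real.sinh_eq, hyx, Real.exp_neg, hyx]; field_simp
  have hc : Real.cosh x = (y ^ 4 + 1) / (2 * y ^ 2) := by
    rw [Real.cosh_eq, hyx, Real.exp_neg, hyx]; field_simp
  have hs2 : Real.sinh (x / 2) = (y ^ 2 - 1) / (2 * y) := by
    rw [Real.sinh_eq, ← hy_def, Real.exp_neg, ← hy_def]; field_simp
  have hc2 : Real.cosh (x / 2) = (y ^ 2 + 1) / (2 * y) := by
    rw [Real.cosh_eq, ← hy_def, Real.exp_neg, ← hy_def]; field_simp
  -- logs
  have l1 : Real.log ((y ^ 4 - 1) / (2 * y ^ 2)) =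
      Real.log (y ^ 2 - 1) + Real.log (1 + y ^ 2) - Real.log 2 - x := by
    have hf : y ^ 4 - 1 = (y ^ 2 - 1) * (1 + y ^ 2) := by ring
    rw [hf, Real.log_div (by positivity) (by positivity),
      Real.log_mul (by linarith) (by linarith),
      Real.log_mul (by norm_num) (by positivity), Real.log_pow]
    push_cast
    rw [hxlog]; ring
  have l2 : Real.log ((y ^ 2 - 1) / (2 * y)) =
      Real.log (y ^ 2 - 1) - Real.log 2 - x / 2 := by
    rw [Real.log_div (by linarith) (by positivity),
      Real.log_mul (by norm_num) (by linarith), hxlog]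
    ring
  have e2 : psiF x - psiF (x / 2) = Real.log (1 + y ^ 2) - x * y ^ 2 / (1 + y ^ 2) := by
    rw [psiF, psiF, hs, hc, hs2, hc2, l1, l2]
    have h4 : x * ((y ^ 4 + 1) / (2 * y ^ 2)) / ((y ^ 4 - 1) / (2 * y ^ 2)) =
        x * (y ^ 4 + 1) / (y ^ 4 - 1) := by
      field_simp
    have h5 : x / 2 * ((y ^ 2 + 1) / (2 * y)) / ((y ^ 2 - 1) / (2 * y)) =
        x / 2 * (y ^ 2 + 1) / (y ^ 2 - 1) := by
      field_simp
    rw [h4, h5]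
    field_simp
    ring
  -- binEntropy side
  have hp1 : ((1 : ℝ) / (1 + y ^ 2))⁻¹ = 1 + y ^ 2 := by field_simp
  have hp2 : (1 : ℝ) - 1 / (1 + y ^ 2) = y ^ 2 / (1 + y ^ 2) := by field_simp; ring
  have hp3 : ((y ^ 2 : ℝ) / (1 + y ^ 2))⁻¹ = (1 + y ^ 2) / y ^ 2 := by field_simp
  have l3 : Real.log ((1 + y ^ 2) / y ^ 2) = Real.log (1 + y ^ 2) - x := by
    rw [Real.log_div (by positivity) (by positivity), Real.log_pow]
    push_cast
    rw [hxlog]; ring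
  have e1 : Real.binEntropy (1 / (1 + Real.exp x)) =
      Real.log (1 + y ^ 2) - x * y ^ 2 / (1 + y ^ 2) := by
    rw [hyx, Real.binEntropy, hp1, hp2, hp3, l3]
    field_simp
    ring
  rw [e1, e2]

-- cubic exp bounds for |x| ≤ 1
lemma exp_cubic {x : ℝ} (hx : |x| ≤ 1) :
    |Real.exp x - (1 + x + x ^ 2 / 2)| ≤ |x| ^ 3 * (2 / 9) := by
  have h := Real.exp_bound hx (n := 3) (by norm_num)
  have hs : ∑ i ∈ Finset.range 3, x ^ i / (Nat.factorial i : ℝ) = 1 + x + x ^ 2 / 2 := by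
    simp [Finset.sum_range_succ, Nat.factorial]
  rw [hs] at h
  convert h using 2
  norm_num [Nat.factorial]

lemma sinh_cubic_bounds {x : ℝ} (hx0 : 0 ≤ x) (hx1 : x ≤ 1 / 2) :
    Real.sinh x ≤ x + (2 / 9) * x ^ 3 ∧ Real.cosh x ≤ 1 + x ^ 2 / 2 + (2 / 9) * x ^ 3
      ∧ 1 + x ^ 2 / 2 - (2 / 9) * x ^ 3 ≤ Real.cosh x := by
  have hax : |x| ≤ 1 := by rw [abs_of_nonneg hx0]; linarith
  have hax' : |(-x)| ≤ 1 := by rwa [abs_neg]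
  have h1 := abs_le.mp (exp_cubic hax)
  have h2 := abs_le.mp (exp_cubic hax')
  rw [abs_of_nonneg hx0] at h1
  rw [abs_neg, abs_of_nonneg hx0] at h2
  rw [Real.sinh_eq, Real.cosh_eq]
  constructor
  · nlinarith [h1.1, h1.2, h2.1, h2.2]
  constructor
  · nlinarith [h1.1, h1.2, h2.1, h2.2]
  · nlinarith [h1.1, h1.2, h2.1, h2.2]

-- Head estimate: for 0 < x ≤ 1/2,  log x - 1 - x^2 ≤ psiF x ≤ log x - 1 + x^2
lemma psiF_head_ub {x : ℝ} (hx0 : 0 < x) (hx1 : x ≤ 1 / 2) :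
    psiF x ≤ Real.log x - 1 + (2 / 9) * x ^ 2 := by
  obtain ⟨hsu, hcu, hcl⟩ := sinh_cubic_bounds hx0.le hx1
  have hsp : 0 < Real.sinh x := Real.sinh_pos_iff.mpr hx0
  have hsl : x ≤ Real.sinh x := (Real.self_lt_sinh_iff.mpr hx0).le
  have hlog : Real.log (Real.sinh x) - Real.log x ≤ (2 / 9) * x ^ 2 := by
    rw [← Real.log_div (ne_of_gt hsp) (ne_of_gt hx0)]
    have h1 : Real.sinh x / x ≤ 1 + (2 / 9) * x ^ 2 := by
      rw [div_le_iff₀ hx0]; nlinarith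
    calc Real.log (Real.sinh x / x) ≤ Real.sinh x / x - 1 :=
          Real.log_le_sub_one_of_pos (by positivity)
      _ ≤ (2 / 9) * x ^ 2 := by linarith
  have hcoth : 1 ≤ x * Real.cosh x / Real.sinh x := by
    rw [le_div_iff₀ hsp]; nlinarith
  unfold psiF; linarith

lemma psiF_head_lb {x : ℝ} (hx0 : 0 < x) (hx1 : x ≤ 1 / 2) :
    Real.log x - 1 - (2 / 3) * x ^ 2 ≤ psiF x := by
  obtain ⟨hsu, hcu, hcl⟩ := sinh_cubic_bounds hx0.le hx1
  have hsp : 0 < Real.sinh x := Real.sinh_pos_iff.mpr hx0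
  have hsl : x ≤ Real.sinh x := (Real.self_lt_sinh_iff.mpr hx0).le
  have hlog : 0 ≤ Real.log (Real.sinh x) - Real.log x := by
    have := Real.log_le_log hx0 hsl
    linarith
  have hcoth : x * Real.cosh x / Real.sinh x ≤ 1 + (2 / 3) * x ^ 2 := by
    rw [div_le_iff₀ hsp]; nlinarith
  unfold psiF; linarith

-- Tail estimates
lemma psiF_tail_formula {x : ℝ} (hx : 0 < x) :
    psiF x = Real.log (1 - Real.exp (-2 * x)) - Real.log 2
      - 2 * x * Real.exp (-2 * x) / (1 - Real.exp (-2 * x)) := by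
  set q := Real.exp (-2 * x) with hq_def
  have hq1 : q < 1 := by
    rw [hq_def]; apply Real.exp_lt_one_iff.mpr; linarith
  have hq0 : 0 < q := Real.exp_pos _
  have henx : Real.exp (-x) = Real.exp x * q := by
    rw [hq_def, ← Real.exp_add]; ring_nf
  have hs : Real.sinh x = Real.exp x * ((1 - q) / 2) := by
    rw [Real.sinh_eq, henx]; ring
  have hc : Real.cosh x = Real.exp x * ((1 + q) / 2) := by
    rw [Real.cosh_eq, henx]; ring
  have h1q : (0:ℝ) < 1 - q := by linarith
  have hls : Real.log (Real.sinh x) = x + Real.log (1 - q) - Real.log 2 := by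
    rw [hs, Real.log_mul (Real.exp_ne_zero x) (by positivity), Real.log_exp,
      Real.log_div (ne_of_gt h1q) (by norm_num)]
    ring
  have hct : x * Real.cosh x / Real.sinh x = x * (1 + q) / (1 - q) := by
    rw [hs, hc,
      show x * (Real.exp x * ((1 + q) / 2)) =
        (x * (1 + q) / (1 - q)) * (Real.exp x * ((1 - q) / 2)) by
          field_simp]
    exact mul_div_cancel_right₀ _ (mul_ne_zero (Real.exp_ne_zero x) (by positivity))
  unfold psiF
  rw [hls, hct]
  field_simp
  ring

lemma psiF_tail_ub {x : ℝ} (hx : 0 < x) : psiF x ≤ -Real.log 2 := by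
  rw [psiF_tail_formula hx]
  set q := Real.exp (-2 * x) with hq_def
  have hq1 : q < 1 := Real.exp_lt_one_iff.mpr (by linarith)
  have hq0 : 0 < q := Real.exp_pos _
  have h1 : Real.log (1 - q) ≤ 0 := Real.log_nonpos (by linarith) (by linarith)
  have h2 : 0 ≤ 2 * x * q / (1 - q) := div_nonneg (by positivity) (by linarith)
  linarith

lemma psiF_tail_lb {x ε : ℝ} (hε : 0 < ε) (hx : 1 / ε ≤ x) (hε1 : ε ≤ 1) :
    -Real.log 2 - ε ≤ psiF x := by
  have hx1 : 1 ≤ x := le_trans (by rw [le_div_iff₀ hε]; nlinarith) hx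
  have hx0 : 0 < x := by linarith
  rw [psiF_tail_formula hx0]
  set q := Real.exp (-2 * x) with hq_def
  have hq1 : q < 1 := Real.exp_lt_one_iff.mpr (by linarith)
  have hq0 : 0 < q := Real.exp_pos _
  -- q ≤ exp(-2) ≤ 1/4
  have he2 : (2:ℝ) ≤ Real.exp 1 := by
    have := Real.add_one_le_exp 1; linarith
  have hq4 : q ≤ 1 / 4 := by
    have h1 : q ≤ Real.exp (-2) := Real.exp_le_exp.mpr (by linarith)
    have h2 : Real.exp (-2) * (Real.exp 1 * Real.exp 1) = 1 := by
      rw [← Real.exp_add, ← Real.exp_add]; norm_num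
    have h3 : (4:ℝ) ≤ Real.exp 1 * Real.exp 1 := by nlinarith
    nlinarith [Real.exp_pos (-2), mul_nonneg (Real.exp_pos (-2)).le
      (by linarith : (0:ℝ) ≤ Real.exp 1 * Real.exp 1 - 4)]
  have h1q : (0:ℝ) < 1 - q := by linarith
  -- -log(1-q) ≤ q/(1-q)
  have hlog : -Real.log (1 - q) ≤ q / (1 - q) := by
    have h1 : Real.log (1 - q)⁻¹ ≤ (1 - q)⁻¹ - 1 :=
      Real.log_le_sub_one_of_pos (by positivity)
    rw [Real.log_inv] at h1
    have h2 : (1 - q)⁻¹ - 1 = q / (1 - q) := by field_simp; ring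
    linarith
  -- x * exp(-x) ≤ exp(-1)
  have hxe : ∀ t : ℝ, t * Real.exp (-t) ≤ Real.exp (-1) * 1 := by
    intro t
    have h1 : t ≤ Real.exp (t - 1) := by
      have := Real.add_one_le_exp (t - 1); linarith
    have h2 : Real.exp (t - 1) * Real.exp (-t) = Real.exp (-1) := by
      rw [← Real.exp_add]; ring_nf
    calc t * Real.exp (-t) ≤ Real.exp (t - 1) * Real.exp (-t) := by
          exact mul_le_mul_of_nonneg_right h1 (Real.exp_pos _).le
      _ = Real.exp (-1) * 1 := by rw [h2, mul_one]
  -- exp(-x) ≤ ε * exp(-1)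
  have hex : Real.exp (-x) ≤ ε * Real.exp (-1) := by
    have h1 : 1 / ε ≤ Real.exp (1 / ε - 1) := by
      have := Real.add_one_le_exp (1 / ε - 1); linarith
    have h2 : Real.exp (-x) ≤ Real.exp (-(1/ε)) := Real.exp_le_exp.mpr (by linarith)
    have h3 : Real.exp (-(1/ε)) * Real.exp (1/ε - 1) = Real.exp (-1) := by
      rw [← Real.exp_add]; ring_nf
    have h4 : Real.exp (-(1/ε)) ≤ ε * Real.exp (-1) := by
      have h5 : Real.exp (-(1/ε)) * (1/ε) ≤ Real.exp (-(1/ε)) * Real.exp (1/ε - 1) :=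
        mul_le_mul_of_nonneg_left h1 (Real.exp_pos _).le
      rw [h3] at h5
      calc Real.exp (-(1/ε)) = (Real.exp (-(1/ε)) * (1/ε)) * ε := by field_simp
        _ ≤ Real.exp (-1) * ε := by
            apply mul_le_mul_of_nonneg_right h5 hε.le
        _ = ε * Real.exp (-1) := by ring
    linarith
  -- the deficit
  have hqx : q = Real.exp (-x) * Real.exp (-x) := by
    rw [hq_def, ← Real.exp_add]; ring_nf
  have he1 : Real.exp (-1) ≤ 1 / 2 := by
    rw [Real.exp_neg, inv_le_comm₀ (Real.exp_pos 1) (by norm_num)]; linarith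
  have hd : q / (1 - q) + 2 * x * q / (1 - q) ≤ ε := by
    have h1 : q / (1 - q) + 2 * x * q / (1 - q) = q * (1 + 2 * x) / (1 - q) := by
      field_simp
    rw [h1]
    have h2 : q * (1 + 2 * x) ≤ 3 * (x * q) := by nlinarith
    have h3 : (1:ℝ) - q ≥ 3 / 4 := by linarith
    have h4 : q * (1 + 2 * x) / (1 - q) ≤ 3 * (x * q) / (3 / 4) := by
      apply div_le_div₀ (by nlinarith) h2 (by norm_num) h3
    have h5 : x * q = (x * Real.exp (-x)) * Real.exp (-x) := by rw [hqx]; ring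
    have h6 : x * q ≤ Real.exp (-1) * (ε * Real.exp (-1)) := by
      rw [h5]
      apply mul_le_mul (by simpa using hxe x) hex (Real.exp_pos _).le (Real.exp_pos _).le
    have h7 : Real.exp (-1) * (ε * Real.exp (-1)) ≤ (1/2) * (ε * (1/2)) := by
      apply mul_le_mul he1 _ (by positivity) (by norm_num)
      exact mul_le_mul_of_nonneg_left he1 hε.le
    nlinarith
  linarith

-- binEnt basics
lemma binEnt_eq (p : ℝ) : binEnt p = Real.binEntropy p / Real.log 2 := by
  rw [binEnt, Real.binEntropy, Real.logb, Real.logb, Real.log_inv, Real.log_inv]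
  ring

lemma binEnt_mono {s t : ℝ} (hs : 0 ≤ s) (hst : s ≤ t) (ht : t ≤ 1 / 2) :
    binEnt s ≤ binEnt t := by
  rw [binEnt_eq, binEnt_eq]
  have hl2 : (0:ℝ) < Real.log 2 := Real.log_pos (by norm_num)
  have h : Real.binEntropy s ≤ Real.binEntropy t :=
    Real.binEntropy_strictMonoOn.monotoneOn
      (Set.mem_Icc.mpr ⟨hs, by rw [show ((2:ℝ))⁻¹ = 1/2 by norm_num]; linarith⟩)
      (Set.mem_Icc.mpr ⟨by linarith, by rw [show ((2:ℝ))⁻¹ = 1/2 by norm_num]; linarith⟩) hst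
  gcongr

lemma sigmoid_pos {a : ℝ} : 0 < 1 / (1 + Real.exp a) := by positivity

lemma sigmoid_lt_half {a : ℝ} (ha : 0 < a) : 1 / (1 + Real.exp a) < 1 / 2 := by
  have h1 : (1:ℝ) < Real.exp a := Real.one_lt_exp_iff.mpr ha
  rw [div_lt_div_iff₀ (by positivity) (by norm_num)]
  linarith

lemma term_lb {a b : ℝ} (ha : 0 < a) (hb : 0 < b) :
    binEnt (1 / (1 + Real.exp a)) ≤
      binEnt (binConv (1 / (1 + Real.exp a)) (1 / (1 + Real.exp b))) := by
  set p := 1 / (1 + Real.exp a) with hp_def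
  set q := 1 / (1 + Real.exp b) with hq_def
  have hp0 : 0 < p := sigmoid_pos
  have hp2 : p < 1 / 2 := sigmoid_lt_half ha
  have hq0 : 0 < q := sigmoid_pos
  have hq2 : q < 1 / 2 := sigmoid_lt_half hb
  have h1 : p ≤ binConv p q := by
    rw [binConv]; nlinarith
  have h2 : binConv p q ≤ 1 / 2 := by
    rw [binConv]; nlinarith
  exact binEnt_mono hp0.le h1 h2

lemma Int.Icc_insert_succ_right {a b : ℤ} (h : a ≤ b + 1) :
    insert (b + 1) (Finset.Icc a b) = Finset.Icc a (b + 1) := by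
  ext x
  simp only [Finset.mem_insert, Finset.mem_Icc]
  omega

lemma sum_sub_telescope (G : ℤ → ℝ) (a b : ℤ) (hb : a - 1 ≤ b) :
    ∑ l ∈ Finset.Icc a b, (G l - G (l - 1)) = G b - G (a - 1) := by
  refine Int.le_induction (motive := fun c _ => ∑ l ∈ Finset.Icc a c, (G l - G (l - 1)) = G c - G (a - 1)) ?_ ?_ b hb
  · show ∑ l ∈ Finset.Icc a (a - 1), (G l - G (l - 1)) = G (a - 1) - G (a - 1)
    rw [Finset.Icc_eq_empty (by omega)]
    simp
  · intro n hn ih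
    show ∑ l ∈ Finset.Icc a (n + 1), (G l - G (l - 1)) = G (n + 1) - G (a - 1)
    rw [← Int.Icc_insert_succ_right (by omega),
      Finset.sum_insert (by simp [Finset.mem_Icc]), ih,
      show n + 1 - 1 = n by ring]
    ring

/-- Per-fading-state inequality in the paper's Theorem 3: with
`p_l = 1/(1 + exp (2^l / E_X))` and `p̃_l = 1/(1 + exp (2^l / E_Z))`, if `0 < ε < 1`,
`E_X / E_Z ≥ 1/ε`, `L₁ ≥ -log₂ ε - log₂ E_Z` and `L₂ ≥ -log₂ ε + log₂ E_X`, then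
`∑_{l = -L₁}^{L₂} [H(p_l ⊗ p̃_l) - H(p̃_l)] ≥ log₂ (1 + E_X / E_Z) - 5 log₂(e) ε`. -/
theorem expansion_rate_bound_single_state (EX EZ ε : ℝ) (hEX : 0 < EX) (hEZ : 0 < EZ)
    (hε : 0 < ε) (hε1 : ε < 1) (hSNR : 1 / ε ≤ EX / EZ) (L1 L2 : ℤ)
    (hL1 : -Real.logb 2 ε - Real.logb 2 EZ ≤ (L1 : ℝ))
    (hL2 : -Real.logb 2 ε + Real.logb 2 EX ≤ (L2 : ℝ)) :
    Real.logb 2 (1 + EX / EZ) - 5 * Real.logb 2 (Real.exp 1) * ε ≤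
      ∑ l ∈ Finset.Icc (-L1) L2,
        (binEnt (binConv (1 / (1 + Real.exp (2 ^ l / EX)))
            (1 / (1 + Real.exp (2 ^ l / EZ)))) -
          binEnt (1 / (1 + Real.exp (2 ^ l / EZ)))) := by
  have hl2 : (0:ℝ) < Real.log 2 := Real.log_pos (by norm_num)
  have hr1 : 1 < EX / EZ := by
    have h : (1:ℝ) < 1 / ε := by rw [lt_div_iff₀ hε]; linarith
    linarith
  have hEZX : EZ < EX := by
    rw [lt_div_iff₀ hEZ] at hr1; linarith
  have hrpos : 0 < EX / EZ := by positivity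
  -- endpoint power bounds
  have hpow_neg : (2:ℝ) ^ (-L1) ≤ ε * EZ := by
    have h1 : ((-L1 : ℤ) : ℝ) ≤ Real.logb 2 (ε * EZ) := by
      rw [Real.logb_mul (ne_of_gt hε) (ne_of_gt hEZ)]; push_cast; linarith
    calc (2:ℝ) ^ (-L1) = (2:ℝ) ^ (((-L1 : ℤ)) : ℝ) := (Real.rpow_intCast 2 (-L1)).symm
      _ ≤ (2:ℝ) ^ (Real.logb 2 (ε * EZ)) :=
          Real.rpow_le_rpow_of_exponent_le (by norm_num) h1
      _ = ε * EZ := Real.rpow_logb (by norm_num) (by norm_num) (by positivity)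
  have hpow_pos : EX / ε ≤ (2:ℝ) ^ L2 := by
    have h1 : Real.logb 2 (EX / ε) ≤ ((L2 : ℤ) : ℝ) := by
      rw [Real.logb_div (ne_of_gt hEX) (ne_of_gt hε)]; push_cast; linarith
    calc EX / ε = (2:ℝ) ^ (Real.logb 2 (EX / ε)) :=
          (Real.rpow_logb (by norm_num) (by norm_num) (by positivity)).symm
      _ ≤ (2:ℝ) ^ ((L2 : ℝ)) := Real.rpow_le_rpow_of_exponent_le (by norm_num) h1
      _ = (2:ℝ) ^ L2 := Real.rpow_intCast 2 L2
  -- nonemptiness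
  have hL12 : -L1 ≤ L2 := by
    have h1 : 0 ≤ -Real.logb 2 ε := by
      have := Real.logb_nonpos (b := 2) (by norm_num) hε.le hε1.le
      linarith
    have h2 : -Real.logb 2 ε ≤ Real.logb 2 (EX / EZ) := by
      have h3 : Real.logb 2 (1 / ε) ≤ Real.logb 2 (EX / EZ) :=
        Real.logb_le_logb_of_le (by norm_num) (by positivity) hSNR
      rwa [Real.logb_div (by norm_num) (ne_of_gt hε), Real.logb_one, zero_sub] at h3
    have h4 : Real.logb 2 (EX / EZ) = Real.logb 2 EX - Real.logb 2 EZ :=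
      Real.logb_div (ne_of_gt hEX) (ne_of_gt hEZ)
    have h5 : (((-L1 : ℤ)) : ℝ) ≤ ((L2 : ℤ) : ℝ) := by push_cast; linarith
    exact_mod_cast h5
  -- definitions
  set GX : ℤ → ℝ := fun l => psiF ((2:ℝ) ^ l / EX) with hGX_def
  set GZ : ℤ → ℝ := fun l => psiF ((2:ℝ) ^ l / EZ) with hGZ_def
  have hident : ∀ (E : ℝ), 0 < E → ∀ l : ℤ,
      binEnt (1 / (1 + Real.exp ((2:ℝ) ^ l / E))) =
        (psiF ((2:ℝ) ^ l / E) - psiF ((2:ℝ) ^ (l - 1) / E)) / Real.log 2 := by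
    intro E hE l
    have hx : (0:ℝ) < (2:ℝ) ^ l / E := by positivity
    rw [binEnt_eq, binEntropy_sigmoid hx,
      show (2:ℝ) ^ l / E / 2 = (2:ℝ) ^ (l - 1) / E by
        rw [zpow_sub_one₀ (by norm_num : (2:ℝ) ≠ 0)]; ring]
  -- step 1: per-term lower bound
  have hstep1 : ∑ l ∈ Finset.Icc (-L1) L2,
      (binEnt (1 / (1 + Real.exp (2 ^ l / EX))) - binEnt (1 / (1 + Real.exp (2 ^ l / EZ)))) ≤
      ∑ l ∈ Finset.Icc (-L1) L2,
        (binEnt (binConv (1 / (1 + Real.exp (2 ^ l / EX))) (1 / (1 + Real.exp (2 ^ l / EZ)))) -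
          binEnt (1 / (1 + Real.exp (2 ^ l / EZ)))) := by
    apply Finset.sum_le_sum
    intro l _
    have := term_lb (a := (2:ℝ) ^ l / EX) (b := (2:ℝ) ^ l / EZ)
      (by positivity) (by positivity)
    linarith
  -- step 2: telescoping
  have hstep2 : ∑ l ∈ Finset.Icc (-L1) L2,
      (binEnt (1 / (1 + Real.exp (2 ^ l / EX))) - binEnt (1 / (1 + Real.exp (2 ^ l / EZ)))) =
      ((GX L2 - GX (-L1 - 1)) - (GZ L2 - GZ (-L1 - 1))) / Real.log 2 := by
    have hcong : ∀ l ∈ Finset.Icc (-L1) L2,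
        binEnt (1 / (1 + Real.exp (2 ^ l / EX))) - binEnt (1 / (1 + Real.exp (2 ^ l / EZ))) =
        ((GX l - GX (l - 1)) - (GZ l - GZ (l - 1))) / Real.log 2 := by
      intro l _
      rw [hident EX hEX l, hident EZ hEZ l, hGX_def, hGZ_def]
      field_simp
    rw [Finset.sum_congr rfl hcong, ← Finset.sum_div, Finset.sum_sub_distrib,
      sum_sub_telescope GX (-L1) L2 (by omega), sum_sub_telescope GZ (-L1) L2 (by omega)]
  -- endpoints
  set α := (2:ℝ) ^ (-L1 - 1) with hα_def
  have hα_pos : 0 < α := by positivity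
  have hα_eq : α = (2:ℝ) ^ (-L1) / 2 := by
    rw [hα_def, zpow_sub_one₀ (by norm_num : (2:ℝ) ≠ 0)]; ring
  set β := (2:ℝ) ^ L2 with hβ_def
  have hβ_pos : 0 < β := by positivity
  set u := α / EX with hu_def
  set v := α / EZ with hv_def
  have hu_pos : 0 < u := by positivity
  have hv_pos : 0 < v := by positivity
  have huv : u ≤ v := by
    rw [hu_def, hv_def]
    gcongr
  have hv_le : v ≤ ε / 2 := by
    rw [hv_def, hα_eq]
    rw [div_le_div_iff₀ hEZ (by norm_num : (0:ℝ) < 2)]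
    nlinarith
  have hv_half : v ≤ 1 / 2 := by linarith
  -- head estimate
  have hA : Real.log (EX / EZ) - ε ≤ GZ (-L1 - 1) - GX (-L1 - 1) := by
    have h1 := psiF_head_lb hv_pos hv_half
    have h2 := psiF_head_ub hu_pos (le_trans huv hv_half)
    have hlog : Real.log v - Real.log u = Real.log (EX / EZ) := by
      rw [← Real.log_div (ne_of_gt hv_pos) (ne_of_gt hu_pos)]
      congr 1
      rw [hu_def, hv_def]
      field_simp
    have hsq : (2/3) * v ^ 2 + (2/9) * u ^ 2 ≤ ε := by nlinarith
    have hGZe : GZ (-L1 - 1) = psiF v := rfl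
    have hGXe : GX (-L1 - 1) = psiF u := rfl
    rw [hGZe, hGXe]
    linarith
  -- tail estimate
  have hbX : 1 / ε ≤ β / EX := by
    rw [hβ_def, le_div_iff₀ hEX]
    calc 1 / ε * EX = EX / ε := by ring
      _ ≤ (2:ℝ) ^ L2 := hpow_pos
  have hB : GZ L2 - GX L2 ≤ ε := by
    have h1 : psiF (β / EZ) ≤ -Real.log 2 := psiF_tail_ub (by positivity)
    have h2 : -Real.log 2 - ε ≤ psiF (β / EX) := psiF_tail_lb hε hbX hε1.le
    have hGZe : GZ L2 = psiF (β / EZ) := rfl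
    have hGXe : GX L2 = psiF (β / EX) := rfl
    rw [hGZe, hGXe]
    linarith
  -- final arithmetic
  have hcore : Real.log (1 + EX / EZ) - 5 * ε ≤
      (GX L2 - GX (-L1 - 1)) - (GZ L2 - GZ (-L1 - 1)) := by
    have hlog1 : Real.log (1 + EX / EZ) - Real.log (EX / EZ) ≤ ε := by
      have h1 : Real.log ((1 + EX / EZ) / (EX / EZ)) ≤ (1 + EX / EZ) / (EX / EZ) - 1 :=
        Real.log_le_sub_one_of_pos (by positivity)
      have h2 : (1 + EX / EZ) / (EX / EZ) - 1 = 1 / (EX / EZ) := by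
        field_simp; ring
      have h3 : 1 / (EX / EZ) ≤ ε := by
        rw [div_le_iff₀ hrpos]
        calc (1:ℝ) = ε * (1 / ε) := by field_simp
          _ ≤ ε * (EX / EZ) := by
              apply mul_le_mul_of_nonneg_left hSNR hε.le
      rw [← Real.log_div (by positivity) (ne_of_gt hrpos)] at *
      linarith
    linarith
  have hfinal : Real.logb 2 (1 + EX / EZ) - 5 * Real.logb 2 (Real.exp 1) * ε =
      (Real.log (1 + EX / EZ) - 5 * ε) / Real.log 2 := by
    rw [Real.logb, Real.logb, Real.log_exp]
    ring
  rw [hfinal]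
  have hmain : (Real.log (1 + EX / EZ) - 5 * ε) / Real.log 2 ≤
      ∑ l ∈ Finset.Icc (-L1) L2,
        (binEnt (1 / (1 + Real.exp (2 ^ l / EX))) - binEnt (1 / (1 + Real.exp (2 ^ l / EZ)))) := by
    rw [hstep2]
    exact (div_le_div_iff_of_pos_right hl2).mpr (by linarith)
  exact hmain.trans hstep1
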